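/- Let G be a locally compact group and U a relatively compact open subset of G containing the identity such that G = ⋃_{n≥0} Uⁿ, and let V = U ∪ U⁻¹. Then the word length function ℓ_V is symmetric (ℓ_V(g⁻¹) = ℓ_V(g) for all g ∈ G and ℓ_V(1) = 0), satisfies ℓ_V ≤ ℓ_U pointwise, and there exists an integer n ≥ 1 with ℓ_U ≤ n·ℓ_V pointwise; in particular ℓ_U and ℓ_V are equivalent. -/

import Mathlib

open scoped Pointwise

/-- The word length function associated with a generating subset `U` of a group:
`ℓ_U g = min {n : g ∈ Uⁿ}`. -/
noncomputable def wordLength {G : Type*} [Group G] (U : Set G) (g : G) : ℕ :=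
  sInf {n : ℕ | g ∈ U ^ n}

/-- For a relatively compact open generating subset `U ∋ 1` of a locally
compact group `G` and `V = U ∪ U⁻¹`, the word length function `ℓ_V` is symmetric,
satisfies `ℓ_V ≤ ℓ_U` pointwise, and `ℓ_U ≤ n · ℓ_V` for some integer `n ≥ 1`;
in particular `ℓ_U` and `ℓ_V` are equivalent. -/
theorem wordLength_symmetrization_equivalent
    {G : Type*} [Group G] [TopologicalSpace G] [IsTopologicalGroup G]
    [LocallyCompactSpace G]
    (U : Set G) (hUopen : IsOpen U) (hone : (1 : G) ∈ U)
    (hUrc : IsCompact (closure U))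
    (hgen : (⋃ n : ℕ, U ^ n) = Set.univ) :
    (∀ g : G, wordLength (U ∪ U⁻¹) g⁻¹ = wordLength (U ∪ U⁻¹) g) ∧
    (wordLength (U ∪ U⁻¹) (1 : G) = 0) ∧
    (∀ g : G, wordLength (U ∪ U⁻¹) g ≤ wordLength U g) ∧
    (∃ n : ℕ, 1 ≤ n ∧ ∀ g : G, wordLength U g ≤ n * wordLength (U ∪ U⁻¹) g) := by
  set V : Set G := U ∪ U⁻¹ with hV
  have hVinv : V⁻¹ = V := by
    simp [hV, Set.union_inv, Set.union_comm]
  -- monotonicity of powers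
  have hmono : ∀ {m n : ℕ}, m ≤ n → U ^ m ⊆ U ^ n := by
    intro m n hmn
    induction n with
    | zero => simp [Nat.le_zero.mp hmn]
    | succ k ih =>
      rcases Nat.lt_or_ge m (k+1) with h | h
      · have := ih (Nat.lt_succ_iff.mp h)
        calc U ^ m ⊆ U ^ k := this
          _ ⊆ U ^ k * U := by
            intro x hx; exact ⟨x, hx, 1, hone, by simp⟩
          _ = U ^ (k+1) := (pow_succ U k).symm
      · have : m = k + 1 := le_antisymm hmn h
        simp [this]
  -- nonemptiness of sInf sets for U
  have hne : ∀ g : G, {n : ℕ | g ∈ U ^ n}.Nonempty := by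
    intro g
    have : g ∈ ⋃ n : ℕ, U ^ n := by rw [hgen]; trivial
    simpa [Set.Nonempty] using this
  have hUV : ∀ n : ℕ, U ^ n ⊆ V ^ n := fun n => Set.pow_subset_pow_left Set.subset_union_left
  have hneV : ∀ g : G, {n : ℕ | g ∈ V ^ n}.Nonempty := fun g => by
    obtain ⟨n, hn⟩ := hne g; exact ⟨n, hUV n hn⟩
  refine ⟨?_, ?_, ?_, ?_⟩
  · intro g
    have key : ∀ n : ℕ, g⁻¹ ∈ V ^ n ↔ g ∈ V ^ n := by
      intro n
      constructor <;> intro h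
      · have : (g⁻¹)⁻¹ ∈ (V ^ n)⁻¹ := Set.inv_mem_inv.mpr h
        simpa [← inv_pow, hVinv] using this
      · have : g⁻¹ ∈ (V ^ n)⁻¹ := Set.inv_mem_inv.mpr h
        simpa [← inv_pow, hVinv] using this
    unfold wordLength
    congr 1
    ext n
    exact key n
  · unfold wordLength
    have : (1 : G) ∈ V ^ 0 := by simp
    exact Nat.eq_zero_of_le_zero (Nat.sInf_le this)
  · intro g
    have hmem : g ∈ U ^ (wordLength U g) := Nat.sInf_mem (hne g)
    exact Nat.sInf_le (hUV _ hmem)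
  · -- compactness argument: V ⊆ U ^ N for some N ≥ 1
    have hK : IsCompact (closure U ∪ (closure U)⁻¹) :=
      hUrc.union hUrc.inv
    have hcover : closure U ∪ (closure U)⁻¹ ⊆ ⋃ n : ℕ, U ^ (n + 1) := by
      intro x _
      have : x ∈ ⋃ n : ℕ, U ^ n := by rw [hgen]; trivial
      obtain ⟨n, hn⟩ := by simpa using this
      exact Set.mem_iUnion.mpr ⟨n, hmono (Nat.le_succ n) hn⟩
    have hopen : ∀ n : ℕ, IsOpen (U ^ (n + 1)) := by
      intro n
      rw [pow_succ]
      exact hUopen.mul_left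
    obtain ⟨t, ht⟩ := hK.elim_finite_subcover (fun n => U ^ (n + 1)) hopen hcover
    set N : ℕ := t.sup id + 1 with hN
    have hVN : V ⊆ U ^ N := by
      have hsub : V ⊆ closure U ∪ (closure U)⁻¹ := by
        apply Set.union_subset_union subset_closure
        exact Set.inv_subset_inv.mpr subset_closure
      intro x hx
      obtain ⟨i, hi, hxi⟩ := Set.mem_iUnion₂.mp (ht (hsub hx))
      exact hmono (Nat.succ_le_succ (Finset.le_sup (f := id) hi)) hxi
    refine ⟨N, Nat.succ_le_succ (Nat.zero_le _), ?_⟩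
    intro g
    have hmem : g ∈ V ^ (wordLength V g) := Nat.sInf_mem (hneV g)
    have : g ∈ U ^ (N * wordLength V g) := by
      rw [pow_mul]
      exact (Set.pow_subset_pow_left hVN) hmem
    exact Nat.sInf_le this
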